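/- For all integers 1 ≤ k ≤ l ≤ d there exists a constant C = C(d, l, k) > 0 such that for every d×d positive definite Hermitian complex matrix D and every d×d positive semidefinite Hermitian complex matrix B, (d/dt)|_{t=0} σ_l(D + tB) ≤ C · σ_k(D)^{(l−k)/k} · (d/dt)|_{t=0} σ_k(D + tB); equivalently, T_{l−1}(D) ≤ C · σ_k(D)^{(l−k)/k} · T_{k−1}(D) in the Loewner order. (Inequality (7.20), established in the proof of Lemma 7.9 by combining Lemma 6.2 (3) and the Newton–Maclaurin inequality.) -/

import Mathlib

open Matrix ComplexOrder

/-- `esymm A k` is the `k`-th elementary symmetric function of the eigenvalues of the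
Hermitian matrix `A`, computed as the (real part of the) sum of all `k × k` principal
minors of `A`. -/
noncomputable def esymm {ι : Type*} [Fintype ι] [DecidableEq ι]
    (A : Matrix ι ι ℂ) (k : ℕ) : ℝ :=
  (∑ S ∈ Finset.powersetCard k (Finset.univ : Finset ι),
    (A.submatrix (fun i : {x : ι // x ∈ S} => (i : ι))
      (fun i : {x : ι // x ∈ S} => (i : ι))).det).re

namespace Stmt12Aux

open Polynomial

variable {ι : Type*} [Fintype ι] [DecidableEq ι]

noncomputable def pminor (M : Matrix ι ι ℂ) (S : Finset ι) : ℂ :=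
  (M.submatrix (fun i : {x : ι // x ∈ S} => (i : ι))
      (fun i : {x : ι // x ∈ S} => (i : ι))).det

noncomputable def msum (M : Matrix ι ι ℂ) (j : ℕ) : ℂ :=
  ∑ S ∈ Finset.powersetCard j (Finset.univ : Finset ι), pminor M S

lemma esymm_eq_msum_re (M : Matrix ι ι ℂ) (j : ℕ) : esymm M j = (msum M j).re := rfl

/-! ### Expansion of `det (M + x • 1)` into principal minors -/

lemma det_piecewise_one (M : Matrix ι ι ℂ) (s : Finset ι) :
    (Matrix.of fun i j => if i ∈ s then M i j else (1 : Matrix ι ι ℂ) i j).det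
      = pminor M s := by
  classical
  set N : Matrix ι ι ℂ := Matrix.of fun i j => if i ∈ s then M i j else (1 : Matrix ι ι ℂ) i j
    with hN
  have h1 : N.submatrix (Equiv.sumCompl (· ∈ s)) (Equiv.sumCompl (· ∈ s)) = fromBlocks
      (M.submatrix (fun i : {x : ι // x ∈ s} => (i : ι)) (fun i : {x : ι // x ∈ s} => (i : ι)))
      (M.submatrix (fun i : {x : ι // x ∈ s} => (i : ι)) (fun i : {x : ι // ¬ x ∈ s} => (i : ι)))
      0 1 := by
    ext i j
    rcases i with i | i <;> rcases j with j | j <;>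
      simp [hN, fromBlocks, Matrix.one_apply, Matrix.submatrix, i.2, j.2, Subtype.ext_iff]
  have h2 := det_submatrix_equiv_self (Equiv.sumCompl (· ∈ s)) N
  rw [h1, det_fromBlocks_zero₂₁, det_one, mul_one] at h2
  rw [← h2]; rfl

lemma det_add_smul_one (M : Matrix ι ι ℂ) (x : ℂ) :
    (M + x • (1 : Matrix ι ι ℂ)).det
      = ∑ s ∈ (Finset.univ : Finset ι).powerset, x ^ (Fintype.card ι - s.card) * pminor M s := by
  classical
  have hdet : (M + x • (1 : Matrix ι ι ℂ)).det
      = (detRowAlternating : (ι → ℂ) [⋀^ι]→ₗ[ℂ] ℂ).toMultilinearMap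
          ((fun i => M i) + fun i => (x • (1 : Matrix ι ι ℂ)) i) := rfl
  rw [hdet, MultilinearMap.map_add_univ]
  rw [← Finset.powerset_univ]
  refine Finset.sum_congr rfl fun s _ => ?_
  have key : s.piecewise (fun i => M i) (fun i => (x • (1 : Matrix ι ι ℂ)) i)
      = sᶜ.piecewise (fun i => x • ((s.piecewise (fun i => M i) (fun i => (1 : Matrix ι ι ℂ) i)) i))
          (s.piecewise (fun i => M i) (fun i => (1 : Matrix ι ι ℂ) i)) := by
    funext i
    by_cases h : i ∈ s <;> simp [Finset.piecewise, h] <;> rfl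
  rw [key, MultilinearMap.map_piecewise_smul]
  have hv : s.piecewise (fun i => M i) (fun i => (1 : Matrix ι ι ℂ) i)
      = fun i => (Matrix.of fun i j => if i ∈ s then M i j else (1 : Matrix ι ι ℂ) i j : Matrix ι ι ℂ) i := by
    funext i j
    by_cases h : i ∈ s <;> simp [Finset.piecewise, h]
  rw [hv]
  have : (detRowAlternating : (ι → ℂ) [⋀^ι]→ₗ[ℂ] ℂ).toMultilinearMap
      (fun i => (Matrix.of fun i j => if i ∈ s then M i j else (1 : Matrix ι ι ℂ) i j : Matrix ι ι ℂ) i)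
      = pminor M s := det_piecewise_one M s
  rw [this]
  simp [Finset.prod_const, Finset.card_compl, smul_eq_mul]

/-! ### Unitary invariance of `msum` -/

noncomputable def mpoly (M : Matrix ι ι ℂ) : Polynomial ℂ :=
  ∑ j ∈ Finset.range (Fintype.card ι + 1), Polynomial.C (msum M j) * X ^ (Fintype.card ι - j)

lemma mpoly_eval (M : Matrix ι ι ℂ) (x : ℂ) :
    (mpoly M).eval x = (M + x • (1 : Matrix ι ι ℂ)).det := by
  rw [det_add_smul_one, mpoly]
  have : ((Finset.univ : Finset ι)).powerset.sum (fun s => x ^ (Fintype.card ι - s.card) * pminor M s)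
      = ∑ j ∈ Finset.range ((Finset.univ : Finset ι).card + 1),
          ∑ s ∈ Finset.powersetCard j (Finset.univ : Finset ι), x ^ (Fintype.card ι - s.card) * pminor M s :=
    Finset.sum_powerset _ _
  rw [this]
  simp only [eval_finset_sum, eval_mul, eval_C, eval_pow, eval_X, Finset.card_univ]
  refine Finset.sum_congr rfl fun j hj => ?_
  rw [msum, Finset.sum_mul]
  refine Finset.sum_congr rfl fun s hs => ?_
  rw [(Finset.mem_powersetCard.mp hs).2, mul_comm]

lemma msum_conj (U M : Matrix ι ι ℂ) (hU : U * star U = 1) (j : ℕ) :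
    msum (U * M * star U) j = msum M j := by
  classical
  by_cases hj : j ≤ Fintype.card ι
  · have hdetU : U.det * (star U).det = 1 := by
      rw [← det_mul, hU, det_one]
    have key : mpoly (U * M * star U) = mpoly M := by
      apply Polynomial.funext
      intro x
      rw [mpoly_eval, mpoly_eval]
      have : U * M * star U + x • (1 : Matrix ι ι ℂ) = U * (M + x • 1) * star U := by
        rw [Matrix.mul_add, Matrix.add_mul]
        congr 1
        rw [Matrix.mul_smul, Matrix.smul_mul, Matrix.mul_one, hU]
      rw [this, det_mul, det_mul, mul_comm, ← mul_assoc, mul_comm ((star U).det), hdetU, one_mul]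
    have := congrArg (fun p => p.coeff (Fintype.card ι - j)) key
    simp only [mpoly, Polynomial.finset_sum_coeff, Polynomial.coeff_C_mul,
      Polynomial.coeff_X_pow] at this
    have hsum : ∀ (N : Matrix ι ι ℂ),
        (∑ j' ∈ Finset.range (Fintype.card ι + 1),
          msum N j' * (if Fintype.card ι - j = Fintype.card ι - j' then 1 else 0)) = msum N j := by
      intro N
      rw [Finset.sum_eq_single j]
      · simp
      · intro j' hj' hne
        have : ¬ (Fintype.card ι - j = Fintype.card ι - j') := by
          simp only [Finset.mem_range] at hj'
          omega
        simp [this]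
      · intro h
        exact absurd (Finset.mem_range.mpr (by omega)) h
    rw [hsum, hsum] at this
    exact this
  · have hempty : Finset.powersetCard j (Finset.univ : Finset ι) = ∅ := by
      rw [Finset.powersetCard_eq_empty]
      simp only [Finset.card_univ]
      omega
    simp [msum, hempty]

/-! ### Derivative of principal minors along a direction, at a diagonal base point -/

lemma perm_exists_ne {κ : Type*} [DecidableEq κ] (σ : Equiv.Perm κ) (hσ : σ ≠ 1) (i : κ) :
    ∃ j, j ≠ i ∧ σ j ≠ j := by
  obtain ⟨a, ha⟩ : ∃ a, σ a ≠ a := by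
    by_contra h
    push_neg at h
    exact hσ (Equiv.ext h)
  by_cases hai : a = i
  · subst hai
    refine ⟨σ a, fun h => ha h, fun h => ha (σ.injective h)⟩
  · exact ⟨a, hai, ha⟩

lemma hasDerivAt_pminor (lam : ι → ℝ) (B : Matrix ι ι ℂ) (S : Finset ι) :
    HasDerivAt
      (fun t : ℝ => pminor (diagonal (fun i => (lam i : ℂ)) + ((t : ℝ) : ℂ) • B) S)
      (∑ i : {x : ι // x ∈ S}, B i i *
        ∏ jj ∈ (Finset.univ : Finset {x : ι // x ∈ S}).erase i, ((lam jj : ℝ) : ℂ)) 0 := by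
  classical
  set κ := {x : ι // x ∈ S}
  set c : κ → ι := fun i => (i : ι)
  set F : κ → κ → ℝ → ℂ := fun r s t =>
    (diagonal (fun i => (lam i : ℂ)) : Matrix ι ι ℂ) (c r) (c s) + ((t : ℝ) : ℂ) * B (c r) (c s)
    with hF
  have hentry : ∀ (r s : κ), HasDerivAt (F r s) (B (c r) (c s)) 0 := by
    intro r s
    have h1 : HasDerivAt (fun t : ℝ => ((t : ℝ) : ℂ)) 1 0 := by
      simpa using (hasDerivAt_id (0 : ℝ)).ofReal_comp
    simpa [hF] using (h1.mul_const (B (c r) (c s))).const_add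
      ((diagonal (fun i => (lam i : ℂ)) : Matrix ι ι ℂ) (c r) (c s))
  have hdet : ∀ t : ℝ, pminor (diagonal (fun i => (lam i : ℂ)) + ((t : ℝ) : ℂ) • B) S
      = ∑ σ : Equiv.Perm κ, ((Equiv.Perm.sign σ : ℤ) : ℂ) * ∏ s : κ, F (σ s) s t := by
    intro t
    rw [pminor, Matrix.det_apply']
    refine Finset.sum_congr rfl fun σ _ => ?_
    have : ∀ s : κ, ((diagonal (fun i => (lam i : ℂ)) + ((t : ℝ) : ℂ) • B).submatrix c c) (σ s) s
        = F (σ s) s t := by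
      intro s
      simp [hF, Matrix.submatrix_apply, Matrix.add_apply, Matrix.smul_apply, smul_eq_mul]
    congr 1
  have hmain : HasDerivAt
      (fun t : ℝ => ∑ σ : Equiv.Perm κ, ((Equiv.Perm.sign σ : ℤ) : ℂ) * ∏ s : κ, F (σ s) s t)
      (∑ σ : Equiv.Perm κ, ((Equiv.Perm.sign σ : ℤ) : ℂ) *
        ∑ i : κ, (∏ j ∈ (Finset.univ : Finset κ).erase i, F (σ j) j 0) • B (c (σ i)) (c i)) 0 := by
    apply HasDerivAt.fun_sum
    intro σ _
    exact (HasDerivAt.fun_finsetProd fun i _ => hentry (σ i) i).const_mul _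
  have heq : (fun t : ℝ => pminor (diagonal (fun i => (lam i : ℂ)) + ((t : ℝ) : ℂ) • B) S)
      = fun t : ℝ => ∑ σ : Equiv.Perm κ, ((Equiv.Perm.sign σ : ℤ) : ℂ) * ∏ s : κ, F (σ s) s t := by
    funext t; exact hdet t
  rw [heq]
  convert hmain using 1
  rw [Finset.sum_eq_single (1 : Equiv.Perm κ)]
  · simp only [Equiv.Perm.sign_one, Units.val_one, Int.cast_one, one_mul, Equiv.Perm.one_apply]
    refine Finset.sum_congr rfl fun i _ => ?_
    have : ∀ j : κ, F j j 0 = ((lam (c j) : ℝ) : ℂ) := by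
      intro j; simp [hF, Matrix.diagonal_apply_eq]
    rw [smul_eq_mul, mul_comm]
    congr 1
    exact Finset.prod_congr rfl fun j _ => (this j).symm
  · intro σ _ hσ
    have : (∑ i : κ, (∏ j ∈ (Finset.univ : Finset κ).erase i, F (σ j) j 0) • B (c (σ i)) (c i)) = 0 := by
      refine Finset.sum_eq_zero fun i _ => ?_
      obtain ⟨j, hji, hj⟩ := perm_exists_ne σ hσ i
      have hzero : F (σ j) j 0 = 0 := by
        have : (c (σ j)) ≠ (c j) := fun h => hj (Subtype.ext h)
        simp [hF, Matrix.diagonal_apply_ne _ this]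
      rw [Finset.prod_eq_zero (Finset.mem_erase.mpr ⟨hji, Finset.mem_univ j⟩) hzero]
      simp
    rw [this, mul_zero]
  · intro h
    exact absurd (Finset.mem_univ _) h

/-- The derivative of `esymm` at a diagonal matrix, real form. -/
lemma hasDerivAt_esymm_diag (lam : ι → ℝ) (B : Matrix ι ι ℂ) (j : ℕ) :
    HasDerivAt
      (fun t : ℝ => esymm (diagonal (fun i => (lam i : ℂ)) + ((t : ℝ) : ℂ) • B) j)
      (∑ S ∈ Finset.powersetCard j (Finset.univ : Finset ι),
        ∑ i : {x : ι // x ∈ S}, (B i i).re *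
          ∏ jj ∈ (Finset.univ : Finset {x : ι // x ∈ S}).erase i, lam jj) 0 := by
  classical
  have hC : HasDerivAt
      (fun t : ℝ => msum (diagonal (fun i => (lam i : ℂ)) + ((t : ℝ) : ℂ) • B) j)
      (∑ S ∈ Finset.powersetCard j (Finset.univ : Finset ι),
        ∑ i : {x : ι // x ∈ S}, B i i *
          ∏ jj ∈ (Finset.univ : Finset {x : ι // x ∈ S}).erase i, ((lam jj : ℝ) : ℂ)) 0 := by
    apply HasDerivAt.fun_sum
    intro S _
    exact hasDerivAt_pminor lam B S
  have hre := (Complex.reCLM.hasFDerivAt.comp_hasDerivAt 0 hC)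
  have hval : Complex.reCLM
      (∑ S ∈ Finset.powersetCard j (Finset.univ : Finset ι),
        ∑ i : {x : ι // x ∈ S}, B i i *
          ∏ jj ∈ (Finset.univ : Finset {x : ι // x ∈ S}).erase i, ((lam jj : ℝ) : ℂ))
      = ∑ S ∈ Finset.powersetCard j (Finset.univ : Finset ι),
        ∑ i : {x : ι // x ∈ S}, (B i i).re *
          ∏ jj ∈ (Finset.univ : Finset {x : ι // x ∈ S}).erase i, lam jj := by
    simp only [Complex.reCLM_apply, Complex.re_sum]
    refine Finset.sum_congr rfl fun S _ => Finset.sum_congr rfl fun i _ => ?_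
    rw [show (∏ jj ∈ (Finset.univ : Finset {x : ι // x ∈ S}).erase i, ((lam jj : ℝ) : ℂ))
        = ((∏ jj ∈ (Finset.univ : Finset {x : ι // x ∈ S}).erase i, lam jj : ℝ) : ℂ) from
      (Complex.ofReal_prod _ _).symm]
    simp [Complex.mul_re, -Complex.ofReal_prod]
  rw [hval] at hre
  exact hre

/-! ### Reindexing the derivative value -/

lemma reindex (lam : ι → ℝ) (hlam : ∀ x, lam x ≠ 0) (b : ι → ℝ) (j : ℕ) :
    (∑ S ∈ Finset.powersetCard j (Finset.univ : Finset ι),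
      ∑ i : {x : ι // x ∈ S}, b i *
        ∏ jj ∈ (Finset.univ : Finset {x : ι // x ∈ S}).erase i, lam jj)
    = ∑ x : ι, b x *
        ∑ S ∈ (Finset.powersetCard j (Finset.univ : Finset ι)).filter (fun S => x ∈ S),
          ∏ y ∈ S.erase x, lam y := by
  classical
  have hS : ∀ S : Finset ι,
      (∑ i : {x : ι // x ∈ S}, b i *
        ∏ jj ∈ (Finset.univ : Finset {x : ι // x ∈ S}).erase i, lam jj)
      = ∑ x ∈ S, b x * ∏ y ∈ S.erase x, lam y := by
    intro S
    have h1 : ∀ i : {x : ι // x ∈ S},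
        (∏ jj ∈ (Finset.univ : Finset {x : ι // x ∈ S}).erase i, lam jj)
          = ∏ y ∈ S.erase (i : ι), lam y := by
      intro i
      have hc : (∏ jj ∈ (Finset.univ : Finset {x : ι // x ∈ S}).erase i, lam jj) * lam i
          = (∏ y ∈ S.erase (i : ι), lam y) * lam i := by
        rw [Finset.prod_erase_mul _ _ (Finset.mem_univ i), Finset.prod_erase_mul _ _ i.2]
        exact Finset.prod_coe_sort S lam
      exact mul_right_cancel₀ (hlam i) hc
    calc (∑ i : {x : ι // x ∈ S}, b i *
          ∏ jj ∈ (Finset.univ : Finset {x : ι // x ∈ S}).erase i, lam jj)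
        = ∑ i : {x : ι // x ∈ S}, b i * ∏ y ∈ S.erase (i : ι), lam y := by
          refine Finset.sum_congr rfl fun i _ => ?_
          rw [h1 i]
      _ = ∑ x ∈ S, b x * ∏ y ∈ S.erase x, lam y :=
          Finset.sum_coe_sort S (fun x => b x * ∏ y ∈ S.erase x, lam y)
  calc (∑ S ∈ Finset.powersetCard j (Finset.univ : Finset ι),
        ∑ i : {x : ι // x ∈ S}, b i *
          ∏ jj ∈ (Finset.univ : Finset {x : ι // x ∈ S}).erase i, lam jj)
      = ∑ S ∈ Finset.powersetCard j (Finset.univ : Finset ι),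
          ∑ x ∈ S, b x * ∏ y ∈ S.erase x, lam y := Finset.sum_congr rfl fun S _ => hS S
    _ = ∑ S ∈ Finset.powersetCard j (Finset.univ : Finset ι), ∑ x : ι,
          if x ∈ S then b x * ∏ y ∈ S.erase x, lam y else 0 := by
        refine Finset.sum_congr rfl fun S _ => ?_
        rw [Finset.sum_ite_mem, Finset.univ_inter]
    _ = ∑ x : ι, ∑ S ∈ Finset.powersetCard j (Finset.univ : Finset ι),
          if x ∈ S then b x * ∏ y ∈ S.erase x, lam y else 0 := Finset.sum_comm
    _ = ∑ x : ι, b x *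
          ∑ S ∈ (Finset.powersetCard j (Finset.univ : Finset ι)).filter (fun S => x ∈ S),
            ∏ y ∈ S.erase x, lam y := by
        refine Finset.sum_congr rfl fun x _ => ?_
        rw [Finset.sum_filter, Finset.mul_sum]
        refine Finset.sum_congr rfl fun S _ => ?_
        by_cases h : x ∈ S <;> simp [h]

/-! ### The scalar inequality -/

lemma key_ineq (lam : ι → ℝ) (hpos : ∀ x, 0 < lam x) {k l : ℕ} (hk1 : 1 ≤ k) (hkl : k ≤ l)
    (hld : l ≤ Fintype.card ι) (x : ι) :
    (∑ S ∈ (Finset.powersetCard l (Finset.univ : Finset ι)).filter (fun S => x ∈ S),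
        ∏ y ∈ S.erase x, lam y)
    ≤ (2 : ℝ) ^ (Fintype.card ι) *
      (∑ S ∈ Finset.powersetCard k (Finset.univ : Finset ι), ∏ y ∈ S, lam y) ^ (((l : ℝ) - k) / k) *
      (∑ S ∈ (Finset.powersetCard k (Finset.univ : Finset ι)).filter (fun S => x ∈ S),
        ∏ y ∈ S.erase x, lam y) := by
  classical
  set e : ℝ := ∑ S ∈ Finset.powersetCard k (Finset.univ : Finset ι), ∏ y ∈ S, lam y with he_def
  have he : 0 < e := by
    obtain ⟨T, _, hTcard⟩ := Finset.exists_subset_card_eq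
      (show k ≤ (Finset.univ : Finset ι).card by simpa [Finset.card_univ] using le_trans hkl hld)
    refine Finset.sum_pos (fun S _ => Finset.prod_pos fun y _ => hpos y) ?_
    exact ⟨T, Finset.mem_powersetCard.mpr ⟨Finset.subset_univ T, hTcard⟩⟩
  have hk0 : (k : ℝ) ≠ 0 := Nat.cast_ne_zero.mpr (by omega)
  set r : ℝ := e ^ (1 / (k : ℝ)) with hr_def
  have hrpos : 0 < r := Real.rpow_pos_of_pos he _
  have hrk : r ^ k = e := by
    rw [hr_def, ← Real.rpow_natCast (e ^ (1 / (k : ℝ))) k, ← Real.rpow_mul he.le]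
    rw [show (1 / (k : ℝ)) * (k : ℕ) = 1 by field_simp, Real.rpow_one]
  have hrlk : r ^ (l - k) = e ^ (((l : ℝ) - k) / k) := by
    rw [hr_def, ← Real.rpow_natCast (e ^ (1 / (k : ℝ))) (l - k), ← Real.rpow_mul he.le]
    congr 1
    rw [Nat.cast_sub hkl]
    field_simp
  have hkey : ∀ V : Finset ι, V.card = k → ∏ y ∈ V, lam y ≤ e := fun V hV =>
    Finset.single_le_sum (f := fun S => ∏ y ∈ S, lam y)
      (fun S _ => Finset.prod_nonneg fun y _ => (hpos y).le)
      (Finset.mem_powersetCard.mpr ⟨Finset.subset_univ V, hV⟩)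
  set RHSsum : ℝ := ∑ S ∈ (Finset.powersetCard k (Finset.univ : Finset ι)).filter (fun S => x ∈ S),
      ∏ y ∈ S.erase x, lam y with hRHS_def
  have hRHSnonneg : 0 ≤ RHSsum :=
    Finset.sum_nonneg fun S _ => Finset.prod_nonneg fun y _ => (hpos y).le
  have hterm : ∀ S ∈ (Finset.powersetCard l (Finset.univ : Finset ι)).filter (fun S => x ∈ S),
      ∏ y ∈ S.erase x, lam y ≤ r ^ (l - k) * RHSsum := by
    intro S hSmem
    obtain ⟨hSP, hxS⟩ := Finset.mem_filter.mp hSmem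
    have hScard : S.card = l := (Finset.mem_powersetCard.mp hSP).2
    set T := S.erase x with hT_def
    have hTcard : T.card = l - 1 := by
      rw [hT_def, Finset.card_erase_of_mem hxS, hScard]
    set G := T.filter (fun y => r < lam y) with hG_def
    have hG : G.card ≤ k - 1 := by
      by_contra h
      push_neg at h
      obtain ⟨V, hVG, hVcard⟩ := Finset.exists_subset_card_eq (show k ≤ G.card by omega)
      have h1 : e < ∏ y ∈ V, lam y := by
        have h2 : ∏ _y ∈ V, r < ∏ y ∈ V, lam y :=
          Finset.prod_lt_prod_of_nonempty (fun i _ => hrpos)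
            (fun i hi => (Finset.mem_filter.mp (hVG hi)).2)
            (Finset.card_pos.mp (by omega))
        rw [Finset.prod_const, hVcard, hrk] at h2
        exact h2
      exact absurd (hkey V hVcard) (not_le.mpr h1)
    obtain ⟨W, hGW, hWT, hWcard⟩ := Finset.exists_subsuperset_card_eq
      (Finset.filter_subset _ T) (show G.card ≤ k - 1 from hG) (show k - 1 ≤ T.card by omega)
    have hsplit : (∏ y ∈ T \ W, lam y) * ∏ y ∈ W, lam y = ∏ y ∈ T, lam y := Finset.prod_sdiff hWT
    have hsmall : ∏ y ∈ T \ W, lam y ≤ r ^ (l - k) := by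
      have hcard : (T \ W).card = l - k := by
        rw [Finset.card_sdiff_of_subset hWT, hTcard, hWcard]; omega
      calc ∏ y ∈ T \ W, lam y ≤ ∏ _y ∈ T \ W, r := by
            refine Finset.prod_le_prod (fun i _ => (hpos i).le) fun i hi => ?_
            have hiT := (Finset.mem_sdiff.mp hi).1
            have hiW := (Finset.mem_sdiff.mp hi).2
            have : ¬ r < lam i := fun hr => hiW (hGW (Finset.mem_filter.mpr ⟨hiT, hr⟩))
            exact not_lt.mp this
        _ = r ^ (l - k) := by rw [Finset.prod_const, hcard]
    have hx_notW : x ∉ W := fun h => (Finset.notMem_erase x S) (hWT h)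
    have hS'mem : (insert x W) ∈ (Finset.powersetCard k (Finset.univ : Finset ι)).filter
        (fun S => x ∈ S) := by
      refine Finset.mem_filter.mpr ⟨Finset.mem_powersetCard.mpr
        ⟨Finset.subset_univ _, ?_⟩, Finset.mem_insert_self _ _⟩
      rw [Finset.card_insert_of_notMem hx_notW, hWcard]; omega
    have hWle : ∏ y ∈ W, lam y ≤ RHSsum := by
      have := Finset.single_le_sum
        (f := fun S => ∏ y ∈ S.erase x, lam y)
        (fun S _ => Finset.prod_nonneg fun y _ => (hpos y).le) hS'mem
      simpa [Finset.erase_insert hx_notW] using this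
    calc ∏ y ∈ S.erase x, lam y = (∏ y ∈ T \ W, lam y) * ∏ y ∈ W, lam y := hsplit.symm
      _ ≤ r ^ (l - k) * RHSsum :=
          mul_le_mul hsmall hWle (Finset.prod_nonneg fun y _ => (hpos y).le)
            (pow_nonneg hrpos.le _)
  have hcard2 : (((Finset.powersetCard l (Finset.univ : Finset ι)).filter
      (fun S => x ∈ S)).card : ℝ) ≤ (2 : ℝ) ^ (Fintype.card ι) := by
    have h1 : ((Finset.powersetCard l (Finset.univ : Finset ι)).filter (fun S => x ∈ S)).card
        ≤ 2 ^ (Fintype.card ι) := by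
      calc ((Finset.powersetCard l (Finset.univ : Finset ι)).filter (fun S => x ∈ S)).card
          ≤ (Finset.powersetCard l (Finset.univ : Finset ι)).card := Finset.card_filter_le _ _
        _ ≤ ((Finset.univ : Finset ι).powerset).card := by
            refine Finset.card_le_card fun S hS => ?_
            exact Finset.mem_powerset.mpr (Finset.mem_powersetCard.mp hS).1
        _ = 2 ^ (Fintype.card ι) := by rw [Finset.card_powerset, Finset.card_univ]
    calc (((Finset.powersetCard l (Finset.univ : Finset ι)).filter
        (fun S => x ∈ S)).card : ℝ) ≤ ((2 ^ (Fintype.card ι) : ℕ) : ℝ) := Nat.cast_le.mpr h1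
      _ = (2 : ℝ) ^ (Fintype.card ι) := by push_cast; ring
  calc (∑ S ∈ (Finset.powersetCard l (Finset.univ : Finset ι)).filter (fun S => x ∈ S),
        ∏ y ∈ S.erase x, lam y)
      ≤ ∑ _S ∈ (Finset.powersetCard l (Finset.univ : Finset ι)).filter (fun S => x ∈ S),
          r ^ (l - k) * RHSsum := Finset.sum_le_sum hterm
    _ = (((Finset.powersetCard l (Finset.univ : Finset ι)).filter (fun S => x ∈ S)).card : ℝ)
        * (r ^ (l - k) * RHSsum) := by rw [Finset.sum_const, nsmul_eq_mul]
    _ ≤ (2 : ℝ) ^ (Fintype.card ι) * (r ^ (l - k) * RHSsum) := by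
        refine mul_le_mul_of_nonneg_right hcard2 ?_
        exact mul_nonneg (pow_nonneg hrpos.le _) hRHSnonneg
    _ = (2 : ℝ) ^ (Fintype.card ι) * e ^ (((l : ℝ) - k) / k) * RHSsum := by
        rw [← hrlk]; ring

/-- `esymm` of a real diagonal matrix. -/
lemma esymm_diag (lam : ι → ℝ) (j : ℕ) :
    esymm (diagonal (fun i => ((lam i : ℝ) : ℂ))) j
      = ∑ S ∈ Finset.powersetCard j (Finset.univ : Finset ι), ∏ y ∈ S, lam y := by
  classical
  rw [esymm_eq_msum_re, msum]
  have hp : ∀ S : Finset ι, pminor (diagonal (fun i => ((lam i : ℝ) : ℂ))) S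
      = ((∏ y ∈ S, lam y : ℝ) : ℂ) := by
    intro S
    rw [pminor, Matrix.submatrix_diagonal _ _ Subtype.coe_injective, Matrix.det_diagonal]
    simp only [Function.comp_apply]
    rw [show (∏ i : {x : ι // x ∈ S}, ((lam (i : ι) : ℝ) : ℂ))
        = ∏ y ∈ S, ((lam y : ℝ) : ℂ) from Finset.prod_coe_sort S (fun y => ((lam y : ℝ) : ℂ))]
    exact (Complex.ofReal_prod _ _).symm
  simp only [hp]
  rw [show (∑ S ∈ Finset.powersetCard j (Finset.univ : Finset ι), ((∏ y ∈ S, lam y : ℝ) : ℂ))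
      = (((∑ S ∈ Finset.powersetCard j (Finset.univ : Finset ι), ∏ y ∈ S, lam y : ℝ)) : ℂ) from
    (Complex.ofReal_sum _ _).symm]
  exact Complex.ofReal_re _

end Stmt12Aux

theorem stmt12 (d l k : ℕ) (hk1 : 1 ≤ k) (hkl : k ≤ l) (hld : l ≤ d) :
    ∃ C : ℝ, 0 < C ∧ ∀ (D B : Matrix (Fin d) (Fin d) ℂ), D.PosDef → B.PosSemidef →
      deriv (fun t : ℝ => esymm (D + (t : ℂ) • B) l) 0
        ≤ C * esymm D k ^ (((l : ℝ) - k) / k) *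
          deriv (fun t : ℝ => esymm (D + (t : ℂ) • B) k) 0 := by
  classical
  refine ⟨(2 : ℝ) ^ d, by positivity, ?_⟩
  intro D B hD hB
  have hH : D.IsHermitian := hD.1
  set U := hH.eigenvectorUnitary with hU_def
  set lam := hH.eigenvalues with hlam_def
  have hpos : ∀ i, 0 < lam i := hD.eigenvalues_pos
  have hU1 : (U : Matrix (Fin d) (Fin d) ℂ) * star (U : Matrix (Fin d) (Fin d) ℂ) = 1 :=
    Matrix.mem_unitaryGroup_iff.mp U.2
  set B' := star (U : Matrix (Fin d) (Fin d) ℂ) * B * (U : Matrix (Fin d) (Fin d) ℂ) with hB'_def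
  have hB' : B'.PosSemidef := by
    have h := hB.conjTranspose_mul_mul_same (U : Matrix (Fin d) (Fin d) ℂ)
    rwa [← Matrix.star_eq_conjTranspose] at h
  have hb : ∀ x, 0 ≤ (B' x x).re := by
    intro x
    have h0 : (0 : ℂ) ≤ B' x x := by
      exact hB'.diag_nonneg
    exact (Complex.le_def.mp h0).1
  set Adiag : Matrix (Fin d) (Fin d) ℂ := Matrix.diagonal (fun i => ((lam i : ℝ) : ℂ))
    with hA_def
  have hspec : D = (U : Matrix (Fin d) (Fin d) ℂ) * Adiag * star (U : Matrix (Fin d) (Fin d) ℂ) :=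
    hH.spectral_theorem
  have hUB : (U : Matrix (Fin d) (Fin d) ℂ) * B' * star (U : Matrix (Fin d) (Fin d) ℂ) = B := by
    rw [hB'_def]
    simp only [← Matrix.mul_assoc]
    rw [hU1, Matrix.one_mul, Matrix.mul_assoc, hU1, Matrix.mul_one]
  have hmat : ∀ t : ℝ, D + ((t : ℝ) : ℂ) • B
      = (U : Matrix (Fin d) (Fin d) ℂ) * (Adiag + ((t : ℝ) : ℂ) • B') *
        star (U : Matrix (Fin d) (Fin d) ℂ) := by
    intro t
    rw [Matrix.mul_add, Matrix.add_mul, ← hspec, Matrix.mul_smul, Matrix.smul_mul, hUB]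
  have hfn : ∀ j : ℕ, (fun t : ℝ => esymm (D + ((t : ℝ) : ℂ) • B) j)
      = fun t : ℝ => esymm (Adiag + ((t : ℝ) : ℂ) • B') j := by
    intro j; funext t
    rw [Stmt12Aux.esymm_eq_msum_re, Stmt12Aux.esymm_eq_msum_re, hmat t,
      Stmt12Aux.msum_conj _ _ hU1]
  have hderiv : ∀ j : ℕ, deriv (fun t : ℝ => esymm (D + ((t : ℝ) : ℂ) • B) j) 0
      = ∑ x : Fin d, (B' x x).re *
          ∑ S ∈ (Finset.powersetCard j (Finset.univ : Finset (Fin d))).filter (fun S => x ∈ S),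
            ∏ y ∈ S.erase x, lam y := by
    intro j
    rw [hfn j, (Stmt12Aux.hasDerivAt_esymm_diag lam B' j).deriv]
    exact Stmt12Aux.reindex lam (fun x => (hpos x).ne') (fun x => (B' x x).re) j
  have hesymmD : esymm D k
      = ∑ S ∈ Finset.powersetCard k (Finset.univ : Finset (Fin d)), ∏ y ∈ S, lam y := by
    have h1 : Stmt12Aux.msum D k = Stmt12Aux.msum Adiag k := by
      rw [hspec]; exact Stmt12Aux.msum_conj _ _ hU1 k
    rw [Stmt12Aux.esymm_eq_msum_re, h1, ← Stmt12Aux.esymm_eq_msum_re]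
    exact Stmt12Aux.esymm_diag lam k
  rw [hderiv l, hderiv k, hesymmD]
  have hkey : ∀ x : Fin d,
      (∑ S ∈ (Finset.powersetCard l (Finset.univ : Finset (Fin d))).filter (fun S => x ∈ S),
        ∏ y ∈ S.erase x, lam y)
      ≤ (2 : ℝ) ^ d *
        (∑ S ∈ Finset.powersetCard k (Finset.univ : Finset (Fin d)), ∏ y ∈ S, lam y)
          ^ (((l : ℝ) - k) / k) *
        (∑ S ∈ (Finset.powersetCard k (Finset.univ : Finset (Fin d))).filter (fun S => x ∈ S),
          ∏ y ∈ S.erase x, lam y) := by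
    intro x
    have := Stmt12Aux.key_ineq lam hpos hk1 hkl
      (show l ≤ Fintype.card (Fin d) by simpa using hld) x
    simpa [Fintype.card_fin] using this
  set eθ : ℝ := (∑ S ∈ Finset.powersetCard k (Finset.univ : Finset (Fin d)),
      ∏ y ∈ S, lam y) ^ (((l : ℝ) - k) / k) with heθ_def
  calc (∑ x : Fin d, (B' x x).re *
        ∑ S ∈ (Finset.powersetCard l (Finset.univ : Finset (Fin d))).filter (fun S => x ∈ S),
          ∏ y ∈ S.erase x, lam y)
      ≤ ∑ x : Fin d, (B' x x).re * ((2 : ℝ) ^ d * eθ *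
          ∑ S ∈ (Finset.powersetCard k (Finset.univ : Finset (Fin d))).filter (fun S => x ∈ S),
            ∏ y ∈ S.erase x, lam y) :=
        Finset.sum_le_sum fun x _ => mul_le_mul_of_nonneg_left (hkey x) (hb x)
    _ = (2 : ℝ) ^ d * eθ * ∑ x : Fin d, (B' x x).re *
          ∑ S ∈ (Finset.powersetCard k (Finset.univ : Finset (Fin d))).filter (fun S => x ∈ S),
            ∏ y ∈ S.erase x, lam y := by
        rw [Finset.mul_sum]
        exact Finset.sum_congr rfl fun x _ => by ring
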